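/- Let $1\le p<\infty$ and let $(w,v)\in A_p^{+,d}(\mathcal{R})$ on $\mathbb{R}^n$. Then there exists a constant $C$ depending only on $n$ and $p$ such that for every $t>0$ and every measurable set $E$, $w(\{x\in\mathbb{R}^n : M^{+,d}(\mathcal{X}_E)(x)>t\}) \le C [(w,v)]_{A_p^{+,d}(\mathcal{R})}^p t^{-p} v(E)$. -/

import Mathlib

open MeasureTheory Set ENNReal

noncomputable section

/-- The half-open cube `∏ᵢ [aᵢ, aᵢ + h)` in `ℝⁿ`. -/
def cube {n : ℕ} (a : Fin n → ℝ) (h : ℝ) : Set (Fin n → ℝ) :=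
  Set.univ.pi fun i => Set.Ico (a i) (a i + h)

/-- The forward adjacent cube `Q⁺ = ∏ᵢ [aᵢ + h, aᵢ + 2h)`. -/
def cubePlus {n : ℕ} (a : Fin n → ℝ) (h : ℝ) : Set (Fin n → ℝ) :=
  Set.univ.pi fun i => Set.Ico (a i + h) (a i + 2 * h)

/-- The dyadic cube with corner `m * 2^k` and side `2^k`. -/
def dyCube {n : ℕ} (k : ℤ) (m : Fin n → ℤ) : Set (Fin n → ℝ) :=
  cube (fun i => (m i : ℝ) * 2 ^ k) (2 ^ k)

/-- The forward adjacent cube of a dyadic cube. -/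
def dyCubePlus {n : ℕ} (k : ℤ) (m : Fin n → ℤ) : Set (Fin n → ℝ) :=
  cubePlus (fun i => (m i : ℝ) * 2 ^ k) (2 ^ k)

/-- The dyadic one-sided maximal function of the characteristic function of `E`:
`M^{+,d}(χ_E)(x) = sup { |E ∩ Q⁺| / |Q| : Q dyadic cube containing x }`. -/
def Mplusd {n : ℕ} (E : Set (Fin n → ℝ)) (x : Fin n → ℝ) : ℝ≥0∞ :=
  ⨆ (k : ℤ) (m : Fin n → ℤ) (_ : x ∈ dyCube k m),
    volume (E ∩ dyCubePlus k m) / volume (dyCube k m)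

namespace Apd

/-- 1D dyadic endpoint comparison: if two dyadic intervals share a point and the first has
smaller or equal scale, the endpoints of the first are inside those of the second. -/
lemma Ico_dyadic_le {k k' : ℤ} (hkk : k' ≤ k) {m m' : ℤ} {x : ℝ}
    (hx' : (m' : ℝ) * 2 ^ k' ≤ x ∧ x < ((m' : ℝ) + 1) * 2 ^ k')
    (hx : (m : ℝ) * 2 ^ k ≤ x ∧ x < ((m : ℝ) + 1) * 2 ^ k) :
    (m : ℝ) * 2 ^ k ≤ (m' : ℝ) * 2 ^ k' ∧
      ((m' : ℝ) + 1) * 2 ^ k' ≤ ((m : ℝ) + 1) * 2 ^ k := by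
  have h2 : (0:ℝ) < 2 ^ k' := by positivity
  set e : ℤ := 2 ^ (k - k').toNat with he
  have hee : ((e : ℝ)) * 2 ^ k' = 2 ^ k := by
    rw [he]
    push_cast
    rw [← zpow_natCast (2:ℝ) (k - k').toNat, Int.toNat_of_nonneg (by omega),
      ← zpow_add₀ (by norm_num : (2:ℝ) ≠ 0)]
    ring_nf
  set d : ℤ := m * e with hd
  have hde : ((d : ℝ)) * 2 ^ k' = (m : ℝ) * 2 ^ k := by
    rw [hd]; push_cast; rw [mul_assoc, hee]
  have hde2 : ((d + e : ℤ) : ℝ) * 2 ^ k' = ((m : ℝ) + 1) * 2 ^ k := by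
    push_cast; rw [add_mul, hde, hee]; ring
  have h1 : d ≤ m' := by
    have h3 : (d : ℝ) * 2 ^ k' < ((m' : ℝ) + 1) * 2 ^ k' := by
      rw [hde]; exact lt_of_le_of_lt hx.1 hx'.2
    have h4 : (d : ℝ) < (m' : ℝ) + 1 := lt_of_mul_lt_mul_right h3 (le_of_lt h2)
    have h5 : (d : ℝ) < ((m' + 1 : ℤ) : ℝ) := by push_cast; linarith
    have := Int.cast_lt.mp h5
    omega
  have h2' : m' + 1 ≤ d + e := by
    have h3 : (m' : ℝ) * 2 ^ k' < ((d + e : ℤ) : ℝ) * 2 ^ k' := by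
      rw [hde2]; exact lt_of_le_of_lt hx'.1 hx.2
    have h4 : (m' : ℝ) < ((d + e : ℤ) : ℝ) := lt_of_mul_lt_mul_right h3 (le_of_lt h2)
    have := Int.cast_lt.mp h4
    omega
  constructor
  · calc (m:ℝ) * 2^k = (d:ℝ) * 2^k' := hde.symm
      _ ≤ (m':ℝ) * 2^k' := by
          apply mul_le_mul_of_nonneg_right _ (le_of_lt h2)
          exact_mod_cast h1
  · calc ((m':ℝ) + 1) * 2^k' = ((m' + 1 : ℤ) : ℝ) * 2 ^ k' := by push_cast; ring
      _ ≤ ((d + e : ℤ) : ℝ) * 2 ^ k' := by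
          apply mul_le_mul_of_nonneg_right _ (le_of_lt h2)
          exact_mod_cast h2'
      _ = ((m:ℝ) + 1) * 2^k := hde2

lemma Ico_dyadic_subset {k k' : ℤ} (hkk : k' ≤ k) {m m' : ℤ} {x : ℝ}
    (hx' : (m' : ℝ) * 2 ^ k' ≤ x ∧ x < ((m' : ℝ) + 1) * 2 ^ k')
    (hx : (m : ℝ) * 2 ^ k ≤ x ∧ x < ((m : ℝ) + 1) * 2 ^ k) :
    Ico ((m' : ℝ) * 2 ^ k') (((m' : ℝ) + 1) * 2 ^ k') ⊆
      Ico ((m : ℝ) * 2 ^ k) (((m : ℝ) + 1) * 2 ^ k) := by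
  obtain ⟨hl, hu⟩ := Ico_dyadic_le hkk hx' hx
  intro y hy
  simp only [mem_Ico] at hy ⊢
  exact ⟨le_trans hl hy.1, lt_of_lt_of_le hy.2 hu⟩

lemma mem_dyCube {n : ℕ} {k : ℤ} {m : Fin n → ℤ} {x : Fin n → ℝ} :
    x ∈ dyCube k m ↔ ∀ i, (m i : ℝ) * 2 ^ k ≤ x i ∧ x i < ((m i : ℝ) + 1) * 2 ^ k := by
  simp only [dyCube, cube, mem_pi, mem_univ, forall_true_left, mem_Ico]
  constructor <;> intro h i <;> rcases h i with ⟨h1, h2⟩ <;> refine ⟨h1, ?_⟩ <;> linarith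

lemma dyCube_subset {n : ℕ} {k k' : ℤ} (hkk : k' ≤ k) {m m' : Fin n → ℤ}
    (hne : (dyCube k' m' ∩ dyCube k m).Nonempty) : dyCube k' m' ⊆ dyCube k m := by
  obtain ⟨x, hx', hx⟩ := hne
  rw [mem_dyCube] at hx hx'
  intro y hy
  rw [mem_dyCube] at hy ⊢
  intro i
  have := Ico_dyadic_subset hkk (hx' i) (hx i) (x := x i)
  have hmem : y i ∈ Ico ((m' i : ℝ) * 2 ^ k') (((m' i : ℝ) + 1) * 2 ^ k') := by
    exact ⟨(hy i).1, (hy i).2⟩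
  exact this hmem

lemma dyCube_index_eq {n : ℕ} {k : ℤ} {m m' : Fin n → ℤ}
    (hne : (dyCube k m ∩ dyCube k m').Nonempty) : m = m' := by
  obtain ⟨x, hx, hx'⟩ := hne
  rw [mem_dyCube] at hx hx'
  funext i
  have h2 : (0:ℝ) < 2 ^ k := by positivity
  have h1 := (hx i).1; have h2' := (hx i).2
  have h3 := (hx' i).1; have h4 := (hx' i).2
  have e1 : (m i : ℝ) < (m' i : ℝ) + 1 := by
    have := lt_of_le_of_lt h1 h4
    nlinarith
  have e2 : (m' i : ℝ) < (m i : ℝ) + 1 := by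
    have := lt_of_le_of_lt h3 h2'
    nlinarith
  have e1' : m i < m' i + 1 := by exact_mod_cast (by push_cast; linarith : (m i:ℝ) < ((m' i + 1 : ℤ):ℝ))
  have e2' : m' i < m i + 1 := by exact_mod_cast (by push_cast; linarith : (m' i:ℝ) < ((m i + 1 : ℤ):ℝ))
  omega

lemma measurableSet_cube {n : ℕ} (a : Fin n → ℝ) (h : ℝ) : MeasurableSet (cube a h) :=
  MeasurableSet.univ_pi fun _ => measurableSet_Ico

lemma measurableSet_dyCube {n : ℕ} (k : ℤ) (m : Fin n → ℤ) : MeasurableSet (dyCube k m) :=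
  measurableSet_cube _ _

lemma volume_cube {n : ℕ} (a : Fin n → ℝ) {h : ℝ} (hh : 0 ≤ h) :
    volume (cube a h) = (ENNReal.ofReal h) ^ n := by
  rw [cube, volume_pi_pi]
  simp only [Real.volume_Ico, add_sub_cancel_left]
  rw [Finset.prod_const, Finset.card_univ, Fintype.card_fin]

lemma dyCubePlus_eq {n : ℕ} (k : ℤ) (m : Fin n → ℤ) :
    dyCubePlus k m = dyCube k (fun i => m i + 1) := by
  unfold dyCubePlus cubePlus dyCube cube
  ext x
  simp only [mem_pi, mem_univ, forall_true_left, mem_Ico]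
  constructor <;> intro hx i <;> rcases hx i with ⟨h1, h2⟩ <;>
    constructor <;> push_cast at h1 h2 ⊢ <;> linarith

lemma cubePlus_eq_cube {n : ℕ} (a : Fin n → ℝ) (h : ℝ) :
    cubePlus a h = cube (fun i => a i + h) h := by
  unfold cubePlus cube
  ext x
  simp only [mem_pi, mem_univ, forall_true_left, mem_Ico]
  constructor <;> intro hx i <;> rcases hx i with ⟨h1, h2⟩ <;>
    constructor <;> linarith

def bS (n : ℕ) (k : ℤ) : ℝ≥0∞ := (ENNReal.ofReal ((2:ℝ) ^ k)) ^ n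

lemma volume_dyCube {n : ℕ} (k : ℤ) (m : Fin n → ℤ) : volume (dyCube k m) = bS n k :=
  volume_cube _ (by positivity)

lemma volume_dyCubePlus {n : ℕ} (k : ℤ) (m : Fin n → ℤ) : volume (dyCubePlus k m) = bS n k := by
  rw [dyCubePlus_eq, volume_dyCube]

lemma bS_pos {n : ℕ} {k : ℤ} : 0 < bS n k := by
  have : (0:ℝ≥0∞) < ENNReal.ofReal ((2:ℝ) ^ k) := by
    rw [ENNReal.ofReal_pos]; positivity
  exact ENNReal.pow_pos this n

lemma bS_ne_top {n : ℕ} {k : ℤ} : bS n k ≠ ⊤ := by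
  apply ENNReal.pow_ne_top
  exact ENNReal.ofReal_ne_top

lemma bS_lt_bS {n : ℕ} (hn : 1 ≤ n) {k k' : ℤ} (hkk : k' < k) : bS n k' < bS n k := by
  apply ENNReal.pow_lt_pow_left (by omega) ?_
  rw [ENNReal.ofReal_lt_ofReal_iff (by positivity)]
  exact zpow_lt_zpow_right₀ (by norm_num) hkk

lemma corner_mem_dyCube {n : ℕ} (k : ℤ) (m : Fin n → ℤ) :
    (fun i => (m i : ℝ) * 2 ^ k) ∈ dyCube k m := by
  rw [mem_dyCube]
  intro i
  have h2 : (0:ℝ) < 2 ^ k := by positivity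
  constructor
  · exact le_refl _
  · nlinarith

end Apd

namespace Apd2
open Apd

lemma volume_double {n : ℕ} (k : ℤ) (m : Fin n → ℤ) :
    volume (cube (fun i => (m i : ℝ) * 2 ^ k) (2 * 2 ^ k)) = 2 ^ n * bS n k := by
  rw [volume_cube _ (by positivity)]
  rw [ENNReal.ofReal_mul (by norm_num)]
  rw [mul_pow, bS]
  norm_num

lemma cube_in_double {n : ℕ} {k k' : ℤ} (hkk : k' ≤ k) {m m' : Fin n → ℤ}
    (hne : (dyCubePlus k' m' ∩ dyCubePlus k m).Nonempty) :
    dyCube k' m' ⊆ cube (fun i => (m i : ℝ) * 2 ^ k) (2 * 2 ^ k) := by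
  obtain ⟨x, hx', hx⟩ := hne
  rw [dyCubePlus_eq, mem_dyCube] at hx hx'
  have hpow : (0:ℝ) < 2 ^ k' := by positivity
  have hpowk : (0:ℝ) < 2 ^ k := by positivity
  have hle : (2:ℝ) ^ k' ≤ 2 ^ k := zpow_le_zpow_right₀ (by norm_num) hkk
  intro y hy
  rw [mem_dyCube] at hy
  intro i _
  simp only [mem_Ico]
  have hends := Ico_dyadic_le hkk
    (by push_cast at hx' ⊢; exact hx' i : ((m' i + 1 : ℤ) : ℝ) * 2 ^ k' ≤ x i ∧
        x i < (((m' i + 1 : ℤ) : ℝ) + 1) * 2 ^ k')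
    (by push_cast at hx ⊢; exact hx i : ((m i + 1 : ℤ) : ℝ) * 2 ^ k ≤ x i ∧
        x i < (((m i + 1 : ℤ) : ℝ) + 1) * 2 ^ k)
  have hlow := hends.1
  have hup := hends.2
  have hyi := hy i
  push_cast at hlow hup hyi ⊢
  constructor
  · nlinarith [hyi.1]
  · nlinarith [hyi.2]

lemma exists_dyCube_mem {n : ℕ} (k : ℤ) (x : Fin n → ℝ) :
    x ∈ dyCube k (fun i => ⌊x i / 2 ^ k⌋) := by
  rw [mem_dyCube]
  intro i
  have h2 : (0:ℝ) < 2 ^ k := by positivity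
  constructor
  · have h1 : (⌊x i / 2^k⌋ : ℝ) ≤ x i / 2^k := Int.floor_le _
    have h3 := mul_le_mul_of_nonneg_right h1 h2.le
    rwa [div_mul_cancel₀ _ (ne_of_gt h2)] at h3
  · have h1 : x i / 2^k < (⌊x i/2^k⌋:ℝ) + 1 := Int.lt_floor_add_one _
    have h3 := mul_lt_mul_of_pos_right h1 h2
    rwa [div_mul_cancel₀ _ (ne_of_gt h2)] at h3

/-- A measurable set of finite measure inside a cube contains measurable subsets of
approximately any prescribed smaller measure. -/
lemma exists_chunk {n : ℕ} (hn : 1 ≤ n) {S : Set (Fin n → ℝ)} (hS : MeasurableSet S)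
    {a : Fin n → ℝ} {h : ℝ} (hSb : S ⊆ cube a h) (hh : 0 < h) {τ : ℝ≥0∞}
    (hτ0 : 0 < τ) (hττ : τ ≤ volume S) :
    ∃ V, V ⊆ S ∧ MeasurableSet V ∧ τ / 2 ≤ volume V ∧ volume V ≤ τ := by
  have i0 : Fin n := ⟨0, hn⟩
  have hτtop : τ ≠ ⊤ := by
    intro hcon
    have h1 : volume S ≤ (ENNReal.ofReal h) ^ n := by
      rw [← volume_cube a hh.le]; exact measure_mono hSb
    rw [hcon] at hττ
    have := top_le_iff.mp hττ
    rw [this] at h1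
    exact (ENNReal.pow_ne_top ENNReal.ofReal_ne_top) (top_le_iff.mp h1)
  set H : ℝ≥0∞ := (ENNReal.ofReal h) ^ (n - 1) with hH
  have hH0 : H ≠ 0 := by
    rw [hH]
    apply pow_ne_zero
    rw [ne_eq, ENNReal.ofReal_eq_zero]
    push_neg
    exact hh
  have hHtop : H ≠ ⊤ := ENNReal.pow_ne_top ENNReal.ofReal_ne_top
  set δ : ℝ := min 1 ((τ / 2 / H).toReal) with hδ
  have hdiv0 : τ / 2 / H ≠ 0 := by
    apply ENNReal.div_ne_zero.mpr
    refine ⟨?_, hHtop⟩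
    simp only [ne_eq, ENNReal.div_eq_zero_iff]
    push_neg
    exact ⟨fun hc => (hτ0.ne' hc).elim, by norm_num⟩
  have hdivtop : τ / 2 / H ≠ ⊤ := by
    have h1 : τ / 2 ≠ ⊤ := (ENNReal.div_lt_top hτtop (by norm_num)).ne
    exact (ENNReal.div_lt_top h1 hH0).ne
  have hδ0 : 0 < δ := by
    rw [hδ]
    apply lt_min one_pos
    exact ENNReal.toReal_pos hdiv0 hdivtop
  have hδH : ENNReal.ofReal δ * H ≤ τ / 2 := by
    have h1 : ENNReal.ofReal δ ≤ τ / 2 / H := by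
      calc ENNReal.ofReal δ ≤ ENNReal.ofReal ((τ / 2 / H).toReal) :=
            ENNReal.ofReal_le_ofReal (min_le_right _ _)
        _ = τ / 2 / H := ENNReal.ofReal_toReal hdivtop
    calc ENNReal.ofReal δ * H ≤ (τ / 2 / H) * H := by
          exact mul_le_mul_left h1 H
      _ = τ / 2 := ENNReal.div_mul_cancel hH0 hHtop
  set g : ℕ → ℝ≥0∞ := fun N => volume (S ∩ {x | x i0 < a i0 + N * δ}) with hg
  have hgmeas : ∀ (c : ℝ), MeasurableSet {x : Fin n → ℝ | x i0 < c} := by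
    intro c
    exact measurableSet_lt (measurable_pi_apply i0) measurable_const
  have hg0 : g 0 = 0 := by
    rw [hg]
    simp only [Nat.cast_zero, zero_mul, add_zero]
    convert measure_empty (μ := (volume : Measure (Fin n → ℝ)))
    rw [eq_empty_iff_forall_notMem]
    rintro x ⟨hxS, hx0⟩
    have := hSb hxS i0 (mem_univ _)
    simp only [mem_Ico] at this
    simp only [mem_setOf_eq] at hx0
    linarith [this.1]
  have hgfull : ∃ N, τ / 2 ≤ g N := by
    refine ⟨⌈h / δ⌉₊, ?_⟩
    have hsub : S ⊆ {x | x i0 < a i0 + (⌈h / δ⌉₊ : ℝ) * δ} := by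
      intro x hx
      have h1 := hSb hx i0 (mem_univ _)
      simp only [mem_Ico] at h1
      have h2 : h ≤ (⌈h / δ⌉₊ : ℝ) * δ := by
        rw [← div_le_iff₀ hδ0]
        exact Nat.le_ceil _
      simp only [mem_setOf_eq]
      linarith [h1.2]
    calc τ / 2 ≤ τ := ENNReal.half_le_self
      _ ≤ volume S := hττ
      _ = volume (S ∩ {x | x i0 < a i0 + (⌈h / δ⌉₊:ℝ) * δ}) := by
          rw [inter_eq_self_of_subset_left hsub]
      _ = g ⌈h / δ⌉₊ := rfl
  have hstep : ∀ N : ℕ, g (N + 1) ≤ g N + τ / 2 := by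
    intro N
    have hsub : S ∩ {x | x i0 < a i0 + ((N:ℝ) + 1) * δ} ⊆
        (S ∩ {x | x i0 < a i0 + (N:ℝ) * δ}) ∪
          (Set.univ.pi fun i => if i = i0 then Ico (a i0 + (N:ℝ) * δ) (a i0 + ((N:ℝ)+1) * δ)
            else Ico (a i) (a i + h)) := by
      rintro x ⟨hxS, hxlt⟩
      simp only [mem_setOf_eq] at hxlt
      by_cases hc : x i0 < a i0 + (N:ℝ) * δ
      · exact Or.inl ⟨hxS, hc⟩
      · push_neg at hc
        refine Or.inr ?_
        intro i _
        by_cases hi : i = i0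
        · subst hi
          simp only [if_pos rfl, mem_Ico]
          exact ⟨hc, hxlt⟩
        · simp only [if_neg hi, mem_Ico]
          have := hSb hxS i (mem_univ _)
          simpa using this
    have hslab : volume (Set.univ.pi fun i =>
        if i = i0 then Ico (a i0 + (N:ℝ) * δ) (a i0 + ((N:ℝ)+1) * δ)
        else Ico (a i) (a i + h)) ≤ τ / 2 := by
      rw [volume_pi_pi]
      have hcalc : ∀ i : Fin n, volume (if i = i0 then Ico (a i0 + (N:ℝ) * δ) (a i0 + ((N:ℝ)+1) * δ)
          else Ico (a i) (a i + h)) = if i = i0 then ENNReal.ofReal δ else ENNReal.ofReal h := by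
        intro i
        by_cases hi : i = i0
        · simp only [if_pos hi, Real.volume_Ico]
          congr 1
          ring
        · simp only [if_neg hi, Real.volume_Ico]
          congr 1
          ring
      calc (∏ i, volume (if i = i0 then Ico (a i0 + (N:ℝ) * δ) (a i0 + ((N:ℝ)+1) * δ)
              else Ico (a i) (a i + h)))
          = ∏ i, (if i = i0 then ENNReal.ofReal δ else ENNReal.ofReal h) := by
            exact Finset.prod_congr rfl (fun i _ => hcalc i)
        _ = ENNReal.ofReal δ * H := by
            rw [← Finset.mul_prod_erase Finset.univ _ (Finset.mem_univ i0)]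
            rw [if_pos rfl]
            congr 1
            rw [hH]
            have hprod : ∀ i ∈ Finset.univ.erase i0,
                (if i = i0 then ENNReal.ofReal δ else ENNReal.ofReal h) = ENNReal.ofReal h := by
              intro i hi
              rw [if_neg (Finset.ne_of_mem_erase hi)]
            rw [Finset.prod_congr rfl hprod, Finset.prod_const,
              Finset.card_erase_of_mem (Finset.mem_univ i0), Finset.card_univ, Fintype.card_fin]
        _ ≤ τ / 2 := hδH
    have hcast : g (N + 1) = volume (S ∩ {x | x i0 < a i0 + ((N:ℝ) + 1) * δ}) := by
      rw [hg]
      norm_num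
    rw [hcast]
    calc volume (S ∩ {x | x i0 < a i0 + ((N:ℝ) + 1) * δ})
        ≤ volume ((S ∩ {x | x i0 < a i0 + (N:ℝ) * δ}) ∪
          (Set.univ.pi fun i => if i = i0 then Ico (a i0 + (N:ℝ) * δ) (a i0 + ((N:ℝ)+1) * δ)
            else Ico (a i) (a i + h))) := measure_mono hsub
      _ ≤ g N + τ / 2 := le_trans (measure_union_le _ _) (add_le_add le_rfl hslab)
  have hex : ∃ N, τ / 2 ≤ g N := hgfull
  have hfind := Nat.find_spec hex
  have hupper : g (Nat.find hex) ≤ τ := by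
    rcases Nat.eq_zero_or_pos (Nat.find hex) with h0 | hpos
    · exfalso
      rw [h0] at hfind
      rw [hg0] at hfind
      have : τ / 2 = 0 := le_antisymm hfind (zero_le)
      rw [ENNReal.div_eq_zero_iff] at this
      rcases this with h1 | h1
      · exact hτ0.ne' h1
      · norm_num at h1
    · obtain ⟨N', hN'⟩ : ∃ N', Nat.find hex = N' + 1 := ⟨Nat.find hex - 1, by omega⟩
      have hmin : ¬ (τ / 2 ≤ g N') := Nat.find_min hex (by omega)
      push_neg at hmin
      calc g (Nat.find hex) = g (N' + 1) := by rw [hN']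
        _ ≤ g N' + τ / 2 := hstep N'
        _ ≤ τ / 2 + τ / 2 := add_le_add hmin.le le_rfl
        _ = τ := ENNReal.add_halves τ
  exact ⟨S ∩ {x | x i0 < a i0 + ((Nat.find hex : ℕ):ℝ) * δ}, inter_subset_left,
    hS.inter (hgmeas _), hfind, hupper⟩

end Apd2

namespace Main
open Apd Apd2

variable {n : ℕ}

abbrev Idx (n : ℕ) := ℤ × (Fin n → ℤ)

def Qc (q : Idx n) : Set (Fin n → ℝ) := dyCube q.1 q.2
def Pc (q : Idx n) : Set (Fin n → ℝ) := dyCubePlus q.1 q.2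
def Pcorner (q : Idx n) : Fin n → ℝ := fun i => ((q.2 i : ℝ) + 1) * 2 ^ q.1

lemma Pc_eq_cube (q : Idx n) : Pc q = cube (Pcorner q) (2 ^ q.1) := by
  rw [Pc, dyCubePlus_eq, dyCube]
  unfold Pcorner
  ext x
  unfold cube
  simp only [mem_pi, mem_univ, forall_true_left, mem_Ico]
  constructor <;> intro hx i <;> rcases hx i with ⟨h1, h2⟩ <;>
    constructor <;> push_cast at h1 h2 ⊢ <;> linarith

lemma volume_Qc (q : Idx n) : volume (Qc q) = bS n q.1 := volume_dyCube _ _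
lemma volume_Pc (q : Idx n) : volume (Pc q) = bS n q.1 := volume_dyCubePlus _ _
lemma measurableSet_Qc (q : Idx n) : MeasurableSet (Qc q) := measurableSet_dyCube _ _
lemma measurableSet_Pc (q : Idx n) : MeasurableSet (Pc q) := by
  rw [Pc, dyCubePlus_eq]; exact measurableSet_dyCube _ _

def sel (E : Set (Fin n → ℝ)) (t : ℝ) : Set (Idx n) :=
  {q | ENNReal.ofReal t * bS n q.1 < volume (E ∩ Pc q)}

def selJ (E : Set (Fin n → ℝ)) (t : ℝ) (j : ℕ) : Set (Idx n) :=
  {q | q ∈ sel E t ∧ q.1.natAbs ≤ j}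

def mx (E : Set (Fin n → ℝ)) (t : ℝ) (j : ℕ) : Set (Idx n) :=
  {q | q ∈ selJ E t j ∧ ∀ q' ∈ selJ E t j, Qc q ⊆ Qc q' → q = q'}

lemma Pc_disjoint_of_ne {q q' : Idx n} (hk : q.1 = q'.1) (hne : q ≠ q') :
    Disjoint (Pc q) (Pc q') := by
  rw [Set.disjoint_iff_inter_eq_empty]
  by_contra hcon
  have hpt : (Pc q ∩ Pc q').Nonempty := nonempty_iff_ne_empty.mpr hcon
  apply hne
  rw [Pc, Pc, dyCubePlus_eq, dyCubePlus_eq, hk] at hpt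
  have := dyCube_index_eq hpt
  have hm : q.2 = q'.2 := by
    funext i
    have := congrFun this i
    omega
  exact Prod.ext hk hm

lemma exists_max (hn : 1 ≤ n) {E : Set (Fin n → ℝ)} {t : ℝ} {j : ℕ} {q0 : Idx n}
    (hq0 : q0 ∈ selJ E t j) : ∃ qs ∈ mx E t j, Qc q0 ⊆ Qc qs := by
  set x0 : Fin n → ℝ := fun i => (q0.2 i : ℝ) * 2 ^ q0.1 with hx0
  have hx0mem : x0 ∈ Qc q0 := corner_mem_dyCube _ _
  set anc : ℤ → Idx n := fun k => (k, fun i => ⌊x0 i / 2 ^ k⌋) with hanc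
  have hancmem : ∀ k, x0 ∈ Qc (anc k) := fun k => exists_dyCube_mem k x0
  have hanc_eq : ∀ q' : Idx n, x0 ∈ Qc q' → q' = anc q'.1 := by
    intro q' hq'
    have hpt : (dyCube q'.1 q'.2 ∩ dyCube q'.1 (fun i => ⌊x0 i / 2 ^ q'.1⌋)).Nonempty :=
      ⟨x0, hq', hancmem q'.1⟩
    exact Prod.ext rfl (dyCube_index_eq hpt)
  set KS : Set ℤ := {k | q0.1 ≤ k ∧ k ≤ (j:ℤ) ∧ anc k ∈ selJ E t j} with hKS
  have hKS0 : q0.1 ∈ KS := by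
    refine ⟨le_refl _, ?_, ?_⟩
    · have := hq0.2; omega
    · rw [← hanc_eq q0 hx0mem]; exact hq0
  have hKSfin : KS.Finite := Set.Finite.subset (Set.finite_Icc q0.1 (j:ℤ))
    (fun k hk => ⟨hk.1, hk.2.1⟩)
  obtain ⟨ks, hksmem, hksmax'⟩ := Set.Finite.exists_maximalFor id KS hKSfin ⟨q0.1, hKS0⟩
  have hksmax : ∀ a ∈ KS, id ks ≤ id a → id ks = id a := fun a ha h => le_antisymm h (hksmax' ha h)
  refine ⟨anc ks, ⟨hksmem.2.2, ?_⟩, ?_⟩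
  · intro q' hq' hsub
    have hx0' : x0 ∈ Qc q' := hsub (hancmem ks)
    have hkle : ks ≤ q'.1 := by
      by_contra hcon
      push_neg at hcon
      have h1 : bS n ks ≤ bS n q'.1 := by
        rw [← volume_Qc (anc ks), ← volume_Qc q']
        exact measure_mono hsub
      exact absurd h1 (not_le.mpr (bS_lt_bS hn hcon))
    have hq'anc : q' = anc q'.1 := hanc_eq q' hx0'
    have hq'KS : q'.1 ∈ KS := by
      refine ⟨le_trans hksmem.1 hkle, ?_, by rw [← hq'anc]; exact hq'⟩
      have := hq'.2; omega
    have := hksmax q'.1 hq'KS hkle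
    simp only [id] at this
    rw [hq'anc, ← this]
  · exact dyCube_subset hksmem.1 ⟨x0, hx0mem, hancmem ks⟩

lemma mx_subset_selJ {E : Set (Fin n → ℝ)} {t : ℝ} {j : ℕ} : mx E t j ⊆ selJ E t j :=
  fun _ hq => hq.1

lemma mx_disjoint (hn : 1 ≤ n) {E : Set (Fin n → ℝ)} {t : ℝ} {j : ℕ} :
    (mx E t j).PairwiseDisjoint Qc := by
  intro q hq q' hq' hne
  rw [Function.onFun, Set.disjoint_iff_inter_eq_empty]
  by_contra hcon
  have hpt : (Qc q ∩ Qc q').Nonempty := nonempty_iff_ne_empty.mpr hcon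
  rcases le_total q.1 q'.1 with hle | hle
  · have hsub : Qc q ⊆ Qc q' := dyCube_subset hle hpt
    exact hne (hq.2 q' hq'.1 hsub)
  · have hsub : Qc q' ⊆ Qc q := dyCube_subset hle ⟨hpt.some, hpt.some_mem.2, hpt.some_mem.1⟩
    exact hne (hq'.2 q hq.1 hsub).symm

lemma mx_Pc_subset {q q' : Idx n} (hk : q'.1 ≤ q.1) (hne : (Pc q' ∩ Pc q).Nonempty) :
    Pc q' ⊆ Pc q := by
  unfold Pc at *
  rw [dyCubePlus_eq] at *
  rw [dyCubePlus_eq (n := n) q.1 q.2] at hne ⊢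
  exact dyCube_subset hk hne

end Main

namespace Main
open Apd Apd2

variable {n : ℕ}

def τq (t : ℝ) (q : Idx n) : ℝ≥0∞ := ENNReal.ofReal t * bS n q.1 / 2 ^ (n + 2)
def Tq (E : Set (Fin n → ℝ)) (q : Idx n) : Set (Fin n → ℝ) := E ∩ Pc q
def sq (v : (Fin n → ℝ) → ℝ≥0∞) (E : Set (Fin n → ℝ)) (t : ℝ) (q : Idx n) : ℝ≥0∞ :=
  sInf {s | τq t q ≤ volume (Tq E q ∩ {x | v x ≤ s})}
def Aq (v : (Fin n → ℝ) → ℝ≥0∞) (E : Set (Fin n → ℝ)) (t : ℝ) (q : Idx n) : Set (Fin n → ℝ) :=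
  Tq E q ∩ {x | v x ≤ sq v E t q}
def Uq (v : (Fin n → ℝ) → ℝ≥0∞) (E : Set (Fin n → ℝ)) (t : ℝ) (q : Idx n) : Set (Fin n → ℝ) :=
  Tq E q \ {x | v x < sq v E t q}

variable {v : (Fin n → ℝ) → ℝ≥0∞} {E : Set (Fin n → ℝ)} {t : ℝ} {j : ℕ}

lemma τq_pos (ht : 0 < t) (q : Idx n) : 0 < τq t q := by
  rw [τq]
  apply ENNReal.div_pos
  · apply ne_of_gt
    apply ENNReal.mul_pos
    · simp [ENNReal.ofReal_pos, ht]
    · exact bS_pos.ne'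
  · exact ENNReal.pow_ne_top (by norm_num)

lemma τq_ne_top (q : Idx n) : τq t q ≠ ⊤ := by
  rw [τq]
  apply ne_of_lt
  apply ENNReal.div_lt_top
  · exact ENNReal.mul_ne_top ENNReal.ofReal_ne_top bS_ne_top
  · positivity

lemma τq_le (q : Idx n) : τq t q ≤ ENNReal.ofReal t * bS n q.1 := by
  have h2 : (1:ℝ≥0∞) ≤ 2 ^ (n+2) := one_le_pow_of_one_le' (by norm_num : (1:ℝ≥0∞) ≤ 2) _
  rw [τq, ENNReal.div_le_iff_le_mul (Or.inl (by positivity : (0:ℝ≥0∞) < 2 ^ (n+2)).ne')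
    (Or.inl (ENNReal.pow_ne_top (by norm_num)))]
  exact le_mul_of_one_le_right (zero_le) h2

lemma τq_le_vol_T (hq : q ∈ sel E t) : τq t q ≤ volume (Tq E q) :=
  le_trans (τq_le q) (le_of_lt hq)

lemma vol_T_le (q : Idx n) : volume (Tq E q) ≤ bS n q.1 := by
  rw [← volume_Pc q]
  exact measure_mono inter_subset_right

lemma vol_T_ne_top (q : Idx n) : volume (Tq E q) ≠ ⊤ :=
  ne_top_of_le_ne_top bS_ne_top (vol_T_le q)

lemma measurableSet_Tq (hE : MeasurableSet E) (q : Idx n) : MeasurableSet (Tq E q) :=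
  hE.inter (measurableSet_Pc q)

lemma measurableSet_Aq (hv : Measurable v) (hE : MeasurableSet E) (q : Idx n) :
    MeasurableSet (Aq v E t q) :=
  (measurableSet_Tq hE q).inter (hv measurableSet_Iic)

lemma measurableSet_Uq (hv : Measurable v) (hE : MeasurableSet E) (q : Idx n) :
    MeasurableSet (Uq v E t q) :=
  (measurableSet_Tq hE q).diff (hv measurableSet_Iio)

/-- The sub-level set at the quantile has volume at least `τq`. -/
lemma quantA (hv : Measurable v) (hE : MeasurableSet E) {q : Idx n} (hq : q ∈ sel E t) :
    τq t q ≤ volume (Aq v E t q) := by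
  rcases eq_or_ne (sq v E t q) ⊤ with hs | hs
  · have : Aq v E t q = Tq E q := by
      rw [Aq, hs]
      simp
    rw [this]
    exact τq_le_vol_T hq
  · -- approximate from above
    have hmem : ∀ i : ℕ, τq t q ≤ volume (Tq E q ∩ {x | v x ≤ sq v E t q + (↑(i+1))⁻¹}) := by
      intro i
      have hlt : sq v E t q < sq v E t q + (↑(i+1) : ℝ≥0∞)⁻¹ := by
        apply ENNReal.lt_add_right hs
        simp
      obtain ⟨s', hs'mem, hs'lt⟩ := sInf_lt_iff.mp hlt
      calc τq t q ≤ volume (Tq E q ∩ {x | v x ≤ s'}) := hs'mem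
        _ ≤ volume (Tq E q ∩ {x | v x ≤ sq v E t q + (↑(i+1))⁻¹}) := by
            apply measure_mono
            apply inter_subset_inter_right
            intro x hx
            exact le_trans hx hs'lt.le
    have hinter : ⋂ i : ℕ, (Tq E q ∩ {x | v x ≤ sq v E t q + (↑(i+1))⁻¹}) = Aq v E t q := by
      rw [Aq]
      ext x
      simp only [mem_iInter, mem_inter_iff, mem_setOf_eq]
      constructor
      · intro hx
        refine ⟨(hx 0).1, ?_⟩
        by_contra hcon
        push_neg at hcon
        obtain ⟨i, hi⟩ := ENNReal.exists_inv_nat_lt (ne_of_gt (tsub_pos_of_lt hcon))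
        have h2 := (hx i).2
        have h3 : (↑(i+1) : ℝ≥0∞)⁻¹ ≤ (↑i)⁻¹ := by
          apply ENNReal.inv_le_inv.mpr
          simp
        have h4 : v x ≤ sq v E t q + (↑i)⁻¹ := le_trans h2 (add_le_add le_rfl h3)
        have h5 : (↑i)⁻¹ < v x - sq v E t q := hi
        have h6 : v x - sq v E t q ≤ (↑i)⁻¹ := by
          apply tsub_le_iff_right.mpr
          rwa [add_comm] at h4
        exact absurd h5 (not_lt.mpr h6)
      · intro hx i
        exact ⟨hx.1, le_trans hx.2 le_self_add⟩
    rw [← hinter]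
    have hanti : Antitone (fun i : ℕ => Tq E q ∩ {x | v x ≤ sq v E t q + (↑(i+1))⁻¹}) := by
      intro i i' hii
      apply inter_subset_inter_right
      intro x hx
      simp only [mem_setOf_eq] at hx ⊢
      refine le_trans hx (add_le_add le_rfl ?_)
      apply ENNReal.inv_le_inv.mpr
      exact_mod_cast Nat.succ_le_succ hii
    rw [hanti.measure_iInter (fun i => ((measurableSet_Tq hE q).inter
      (hv measurableSet_Iic)).nullMeasurableSet)
      ⟨0, ne_top_of_le_ne_top (vol_T_ne_top q) (measure_mono inter_subset_left)⟩]
    exact le_iInf hmem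

/-- The strict sub-level set at the quantile has volume at most `τq`. -/
lemma quantB (hv : Measurable v) (hE : MeasurableSet E) (q : Idx n) :
    volume (Tq E q ∩ {x | v x < sq v E t q}) ≤ τq t q := by
  rcases eq_or_ne (sq v E t q) 0 with hs | hs
  · have : Tq E q ∩ {x | v x < sq v E t q} = ∅ := by
      rw [hs]
      ext x
      simp
    rw [this]
    simp
  · obtain ⟨u, hu_mono, hu_mem, hu_tend⟩ := exists_seq_strictMono_tendsto'
      (pos_iff_ne_zero.mpr hs : (0:ℝ≥0∞) < sq v E t q)
    have hunion : Tq E q ∩ {x | v x < sq v E t q} = ⋃ i, Tq E q ∩ {x | v x ≤ u i} := by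
      ext x
      simp only [mem_iUnion, mem_inter_iff, mem_setOf_eq]
      constructor
      · rintro ⟨hxT, hxv⟩
        obtain ⟨i, hi⟩ := (hu_tend.eventually_const_lt hxv).exists
        exact ⟨i, hxT, hi.le⟩
      · rintro ⟨i, hxT, hxv⟩
        exact ⟨hxT, lt_of_le_of_lt hxv (hu_mem i).2⟩
    rw [hunion]
    have hmono : Monotone (fun i => Tq E q ∩ {x | v x ≤ u i}) := by
      intro i i' hii
      apply inter_subset_inter_right
      intro x hx
      exact le_trans hx (hu_mono.monotone hii)
    rw [hmono.measure_iUnion]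
    apply iSup_le
    intro i
    by_contra hcon
    push_neg at hcon
    have humem : u i ∈ {s | τq t q ≤ volume (Tq E q ∩ {x | v x ≤ s})} := hcon.le
    have := csInf_le (OrderBot.bddBelow _) humem
    exact absurd this (not_le.mpr (hu_mem i).2)

end Main

namespace Main
open Apd Apd2

variable {n : ℕ}

open Classical in
def chunkSet (a : Fin n → ℝ) (h : ℝ) (τ : ℝ≥0∞) (S : Set (Fin n → ℝ)) : Set (Fin n → ℝ) :=
  if hc : 1 ≤ n ∧ MeasurableSet S ∧ S ⊆ cube a h ∧ 0 < h ∧ 0 < τ ∧ τ ≤ volume S then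
    (exists_chunk hc.1 hc.2.1 hc.2.2.1 hc.2.2.2.1 hc.2.2.2.2.1 hc.2.2.2.2.2).choose
  else ∅

open Classical in
lemma chunkSet_subset (a : Fin n → ℝ) (h : ℝ) (τ : ℝ≥0∞) (S : Set (Fin n → ℝ)) :
    chunkSet a h τ S ⊆ S := by
  rw [chunkSet]
  split_ifs with hc
  · exact (exists_chunk hc.1 hc.2.1 hc.2.2.1 hc.2.2.2.1 hc.2.2.2.2.1 hc.2.2.2.2.2).choose_spec.1
  · exact empty_subset _

open Classical in
lemma chunkSet_measurable (a : Fin n → ℝ) (h : ℝ) (τ : ℝ≥0∞) (S : Set (Fin n → ℝ)) :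
    MeasurableSet (chunkSet a h τ S) := by
  rw [chunkSet]
  split_ifs with hc
  · exact (exists_chunk hc.1 hc.2.1 hc.2.2.1 hc.2.2.2.1 hc.2.2.2.2.1
      hc.2.2.2.2.2).choose_spec.2.1
  · exact MeasurableSet.empty

open Classical in
lemma chunkSet_vol_le (a : Fin n → ℝ) (h : ℝ) (τ : ℝ≥0∞) (S : Set (Fin n → ℝ)) :
    volume (chunkSet a h τ S) ≤ τ := by
  rw [chunkSet]
  split_ifs with hc
  · exact (exists_chunk hc.1 hc.2.1 hc.2.2.1 hc.2.2.2.1 hc.2.2.2.2.1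
      hc.2.2.2.2.2).choose_spec.2.2.2
  · simp

open Classical in
lemma chunkSet_vol_ge {a : Fin n → ℝ} {h : ℝ} {τ : ℝ≥0∞} {S : Set (Fin n → ℝ)}
    (hc : 1 ≤ n ∧ MeasurableSet S ∧ S ⊆ cube a h ∧ 0 < h ∧ 0 < τ ∧ τ ≤ volume S) :
    τ / 2 ≤ volume (chunkSet a h τ S) := by
  rw [chunkSet, dif_pos hc]
  exact (exists_chunk hc.1 hc.2.1 hc.2.2.1 hc.2.2.2.1 hc.2.2.2.2.1
    hc.2.2.2.2.2).choose_spec.2.2.1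

variable (v : (Fin n → ℝ) → ℝ≥0∞) (E : Set (Fin n → ℝ)) (t : ℝ) (j : ℕ)

def lvl (j : ℕ) (q : Idx n) : ℕ := (q.1 + j).toNat

def RemF : ℕ → Set (Fin n → ℝ)
  | 0 => ∅
  | (s+1) => RemF s ∪
      ⋃ (q : Idx n) (_ : q ∈ mx E t j ∧ lvl j q = s),
        chunkSet (Pcorner q) (2 ^ q.1) (τq t q) (Uq v E t q \ RemF s)

def Vq (q : Idx n) : Set (Fin n → ℝ) :=
  chunkSet (Pcorner q) (2 ^ q.1) (τq t q) (Uq v E t q \ RemF v E t j (lvl j q))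

lemma RemF_mono : Monotone (RemF v E t j) := by
  apply monotone_nat_of_le_succ
  intro s
  rw [RemF]
  exact subset_union_left

lemma RemF_measurable : ∀ s, MeasurableSet (RemF v E t j s) := by
  intro s
  induction s with
  | zero => exact MeasurableSet.empty
  | succ s ih =>
    rw [RemF]
    apply ih.union
    apply MeasurableSet.iUnion
    intro q
    apply MeasurableSet.iUnion
    intro _
    exact chunkSet_measurable _ _ _ _

lemma Vq_subset (q : Idx n) : Vq v E t j q ⊆ Uq v E t q \ RemF v E t j (lvl j q) :=
  chunkSet_subset _ _ _ _

lemma Vq_subset_layer {q : Idx n} (hq : q ∈ mx E t j) :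
    Vq v E t j q ⊆ RemF v E t j (lvl j q + 1) := by
  rw [RemF]
  refine subset_union_of_subset_right ?_ _
  intro x hx
  exact mem_iUnion.mpr ⟨q, mem_iUnion.mpr ⟨⟨hq, rfl⟩, hx⟩⟩

lemma RemF_zero : RemF v E t j 0 = ∅ := by rw [RemF]

lemma RemF_subset_iUnion : ∀ s, RemF v E t j s ⊆
    ⋃ (q : Idx n) (_ : q ∈ mx E t j ∧ lvl j q < s), Vq v E t j q := by
  intro s
  induction s with
  | zero => rw [RemF]; exact empty_subset _
  | succ s ih =>
    rw [RemF]
    apply union_subset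
    · refine subset_trans ih ?_
      intro x hx
      obtain ⟨q, hq, hxq⟩ := mem_iUnion₂.mp hx
      exact mem_iUnion₂.mpr ⟨q, ⟨hq.1, by omega⟩, hxq⟩
    · intro x hx
      obtain ⟨q, hq, hxq⟩ := mem_iUnion₂.mp hx
      refine mem_iUnion₂.mpr ⟨q, ⟨hq.1, by omega⟩, ?_⟩
      rw [Vq, hq.2]
      exact hxq

lemma Vq_pairwise_disjoint (hn : 1 ≤ n) : (mx E t j).PairwiseDisjoint (Vq v E t j) := by
  intro q hq q' hq' hne
  rw [Function.onFun]
  rcases lt_trichotomy (lvl j q) (lvl j q') with hlt | heq | hlt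
  · apply Disjoint.mono (Vq_subset_layer v E t j hq) (Vq_subset v E t j q')
    rw [disjoint_comm]
    apply Disjoint.mono_left (diff_subset_compl _ _)
    rw [Set.disjoint_compl_left_iff_subset]
    exact RemF_mono v E t j hlt
  · -- same level: same scale, disjoint plus cubes
    have hkeq : q.1 = q'.1 := by
      have h1 : q.1 + j ≥ 0 := by have := hq.1.2; omega
      have h2 : q'.1 + j ≥ 0 := by have := hq'.1.2; omega
      rw [lvl, lvl] at heq
      omega
    have hdisj : Disjoint (Pc q) (Pc q') := Pc_disjoint_of_ne hkeq hne
    apply Disjoint.mono _ _ hdisj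
    · exact subset_trans (Vq_subset v E t j q) (subset_trans diff_subset
        (subset_trans diff_subset inter_subset_right))
    · exact subset_trans (Vq_subset v E t j q') (subset_trans diff_subset
        (subset_trans diff_subset inter_subset_right))
  · apply Disjoint.mono (Vq_subset v E t j q) (Vq_subset_layer v E t j hq')
    apply Disjoint.mono_left (diff_subset_compl _ _)
    rw [Set.disjoint_compl_left_iff_subset]
    exact RemF_mono v E t j hlt

end Main

namespace Main
open Apd Apd2

variable {n : ℕ} {v : (Fin n → ℝ) → ℝ≥0∞} {E : Set (Fin n → ℝ)} {t : ℝ} {j : ℕ}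

lemma lvl_lt_scale {q q' : Idx n} (hq : q ∈ selJ E t j) (hq' : q' ∈ selJ E t j)
    (hl : lvl j q' < lvl j q) : q'.1 < q.1 := by
  have h1 := hq.2
  have h2 := hq'.2
  rw [lvl, lvl] at hl
  omega

lemma Uq_subset_Pc (q : Idx n) : Uq v E t q ⊆ Pc q :=
  subset_trans diff_subset inter_subset_right

lemma Uq_subset_E (q : Idx n) : Uq v E t q ⊆ E :=
  subset_trans diff_subset inter_subset_left

/-- Total volume taken by earlier chunks inside the plus-cube of a maximal cube. -/
lemma desc_vol (hn : 1 ≤ n) {q : Idx n} (hq : q ∈ mx E t j) :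
    volume (RemF v E t j (lvl j q) ∩ Uq v E t q) ≤ ENNReal.ofReal t * bS n q.1 / 4 := by
  classical
  set D : Set (Idx n) :=
    {q' | q' ∈ mx E t j ∧ lvl j q' < lvl j q ∧ (Pc q' ∩ Pc q).Nonempty} with hD
  have hDc : D.Countable := Set.to_countable _
  -- step 1 : covering
  have hcov : RemF v E t j (lvl j q) ∩ Uq v E t q ⊆ ⋃ q' ∈ D, Vq v E t j q' := by
    rintro x ⟨hxR, hxU⟩
    obtain ⟨q', hq', hxq'⟩ := mem_iUnion₂.mp (RemF_subset_iUnion v E t j (lvl j q) hxR)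
    refine mem_iUnion₂.mpr ⟨q', ⟨hq'.1, hq'.2, ⟨x, ?_, ?_⟩⟩, hxq'⟩
    · exact Uq_subset_Pc q' ((Vq_subset v E t j q' hxq').1)
    · exact Uq_subset_Pc q hxU
  -- step 2 : sum of tau's
  have hstep2 : volume (⋃ q' ∈ D, Vq v E t j q') ≤ ∑' q' : D, τq t q'.1 := by
    refine le_trans (measure_biUnion_le volume hDc _) ?_
    exact ENNReal.tsum_le_tsum (fun q' => chunkSet_vol_le _ _ _ _)
  -- step 3 : sum of cube volumes
  have hstep3 : ∑' q' : D, bS n (q'.1).1 ≤ 2 ^ n * bS n q.1 := by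
    have hdisj : D.PairwiseDisjoint Qc := (mx_disjoint hn).subset (fun q' hq' => hq'.1)
    have hvol : ∑' q' : D, bS n (q'.1).1 = volume (⋃ q' ∈ D, Qc q') := by
      rw [measure_biUnion hDc hdisj (fun q' _ => measurableSet_Qc q')]
      congr 1
      funext q'
      rw [volume_Qc]
    rw [hvol, ← volume_double q.1 q.2]
    apply measure_mono
    intro x hx
    obtain ⟨q', hq', hxq'⟩ := mem_iUnion₂.mp hx
    have hk : q'.1 ≤ q.1 := (lvl_lt_scale hq.1 hq'.1.1 hq'.2.1).le
    exact cube_in_double hk hq'.2.2 hxq'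
  -- assemble
  have hτeq : ∀ q' : Idx n, τq t q' = (ENNReal.ofReal t / 2 ^ (n+2)) * bS n q'.1 := by
    intro q'
    rw [τq, div_eq_mul_inv, div_eq_mul_inv]
    ring
  calc volume (RemF v E t j (lvl j q) ∩ Uq v E t q)
      ≤ volume (⋃ q' ∈ D, Vq v E t j q') := measure_mono hcov
    _ ≤ ∑' q' : D, τq t q'.1 := hstep2
    _ = (ENNReal.ofReal t / 2 ^ (n+2)) * ∑' q' : D, bS n (q'.1).1 := by
        rw [← ENNReal.tsum_mul_left]
        congr 1
        funext q'
        exact hτeq q'.1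
    _ ≤ (ENNReal.ofReal t / 2 ^ (n+2)) * (2 ^ n * bS n q.1) := by
        exact mul_le_mul_right hstep3 _
    _ = ENNReal.ofReal t * bS n q.1 / 4 := by
        have hc : ((2:ℝ≥0∞)^n) ≠ 0 := (by positivity : (0:ℝ≥0∞) < 2^n).ne'
        have hct : ((2:ℝ≥0∞)^n) ≠ ⊤ := ENNReal.pow_ne_top (by norm_num)
        have h24 : ((2:ℝ≥0∞) ^ (n+2))⁻¹ * 2 ^ n = 4⁻¹ := by
          rw [pow_add, ENNReal.mul_inv (Or.inl hc) (Or.inl hct),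
            mul_comm ((2:ℝ≥0∞)^n)⁻¹ ((2^2:ℝ≥0∞))⁻¹, mul_assoc,
            ENNReal.inv_mul_cancel hc hct, mul_one]
          norm_num
        rw [div_eq_mul_inv, div_eq_mul_inv]
        calc ENNReal.ofReal t * ((2:ℝ≥0∞)^(n+2))⁻¹ * (2^n * bS n q.1)
            = ENNReal.ofReal t * bS n q.1 * (((2:ℝ≥0∞)^(n+2))⁻¹ * 2^n) := by ring
          _ = ENNReal.ofReal t * bS n q.1 * 4⁻¹ := by rw [h24]

end Main

namespace Main
open Apd Apd2

variable {n : ℕ} {v : (Fin n → ℝ) → ℝ≥0∞} {E : Set (Fin n → ℝ)} {t : ℝ} {j : ℕ}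

lemma eighth_quarter_half (x : ℝ≥0∞) : x / 8 + x / 4 ≤ x / 2 := by
  have h1 : x / 8 ≤ x / 4 := ENNReal.div_le_div_left (by norm_num) x
  calc x / 8 + x / 4 ≤ x / 4 + x / 4 := add_le_add h1 le_rfl
    _ = (x + x) / 4 := ENNReal.div_add_div_same
    _ = (2 * x) / (2 * 2) := by rw [two_mul]; norm_num
    _ = x / 2 := ENNReal.mul_div_mul_left _ _ (by norm_num) (by norm_num)

lemma τq_le_eighth (hn : 1 ≤ n) (q : Idx n) :
    τq t q ≤ ENNReal.ofReal t * bS n q.1 / 8 := by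
  rw [τq]
  apply ENNReal.div_le_div_left
  calc (8:ℝ≥0∞) = 2 ^ 3 := by norm_num
    _ ≤ 2 ^ (n + 2) := by
        apply pow_le_pow_right₀ (by norm_num)
        omega

/-- The key volume lower bound allowing to take the chunk `Vq`. -/
lemma vol_Uq_sub_Rem (hn : 1 ≤ n) (hv : Measurable v) (hE : MeasurableSet E)
    {q : Idx n} (hq : q ∈ mx E t j) :
    τq t q ≤ volume (Uq v E t q \ RemF v E t j (lvl j q)) := by
  set β := bS n q.1 with hβ
  set R := RemF v E t j (lvl j q) with hR
  have hsel : q ∈ sel E t := hq.1.1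
  have hsplit : Tq E q ⊆ (Uq v E t q \ R) ∪ ((Tq E q ∩ {x | v x < sq v E t q}) ∪ (R ∩ Uq v E t q)) := by
    intro x hx
    by_cases h1 : v x < sq v E t q
    · exact Or.inr (Or.inl ⟨hx, h1⟩)
    · have hxU : x ∈ Uq v E t q := ⟨hx, h1⟩
      by_cases h2 : x ∈ R
      · exact Or.inr (Or.inr ⟨h2, hxU⟩)
      · exact Or.inl ⟨hxU, h2⟩
  have hvols : ENNReal.ofReal t * β < volume (Uq v E t q \ R)
      + (ENNReal.ofReal t * β / 8 + ENNReal.ofReal t * β / 4) := by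
    calc ENNReal.ofReal t * β < volume (Tq E q) := hsel
      _ ≤ volume (Uq v E t q \ R) + (volume (Tq E q ∩ {x | v x < sq v E t q})
            + volume (R ∩ Uq v E t q)) := by
          refine le_trans (measure_mono hsplit) ?_
          refine le_trans (measure_union_le _ _) ?_
          exact add_le_add le_rfl (measure_union_le _ _)
      _ ≤ volume (Uq v E t q \ R) + (ENNReal.ofReal t * β / 8 + ENNReal.ofReal t * β / 4) := by
          apply add_le_add le_rfl
          apply add_le_add
          · exact le_trans (quantB hv hE q) (τq_le_eighth hn q)
          · exact desc_vol hn hq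
  have hhalf : ENNReal.ofReal t * β ≤ volume (Uq v E t q \ R) + ENNReal.ofReal t * β / 2 :=
    le_trans hvols.le (add_le_add le_rfl (eighth_quarter_half _))
  have hcancel : ENNReal.ofReal t * β / 2 ≤ volume (Uq v E t q \ R) := by
    have hne : ENNReal.ofReal t * β / 2 ≠ ⊤ := by
      apply ne_of_lt
      apply ENNReal.div_lt_top (ENNReal.mul_ne_top ENNReal.ofReal_ne_top bS_ne_top) (by norm_num)
    have h2 : ENNReal.ofReal t * β / 2 + ENNReal.ofReal t * β / 2
        ≤ volume (Uq v E t q \ R) + ENNReal.ofReal t * β / 2 := by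
      rw [ENNReal.add_halves]
      exact hhalf
    exact (ENNReal.add_le_add_iff_right hne).mp h2
  calc τq t q ≤ ENNReal.ofReal t * β / 8 := τq_le_eighth hn q
    _ ≤ ENNReal.ofReal t * β / 2 := ENNReal.div_le_div_left (by norm_num) _
    _ ≤ volume (Uq v E t q \ R) := hcancel

lemma chunk_cond (hn : 1 ≤ n) (hv : Measurable v) (hE : MeasurableSet E) (ht : 0 < t)
    {q : Idx n} (hq : q ∈ mx E t j) :
    1 ≤ n ∧ MeasurableSet (Uq v E t q \ RemF v E t j (lvl j q)) ∧
      (Uq v E t q \ RemF v E t j (lvl j q)) ⊆ cube (Pcorner q) (2 ^ q.1) ∧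
      (0:ℝ) < 2 ^ q.1 ∧ 0 < τq t q ∧ τq t q ≤ volume (Uq v E t q \ RemF v E t j (lvl j q)) := by
  refine ⟨hn, (measurableSet_Uq hv hE q).diff (RemF_measurable v E t j _), ?_, by positivity,
    τq_pos ht q, vol_Uq_sub_Rem hn hv hE hq⟩
  rw [← Pc_eq_cube]
  exact subset_trans diff_subset (Uq_subset_Pc q)

lemma vol_Vq_ge (hn : 1 ≤ n) (hv : Measurable v) (hE : MeasurableSet E) (ht : 0 < t)
    {q : Idx n} (hq : q ∈ mx E t j) : τq t q / 2 ≤ volume (Vq v E t j q) :=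
  chunkSet_vol_ge (chunk_cond hn hv hE ht hq)

end Main

namespace Main
open Apd Apd2

variable {n : ℕ} {v w : (Fin n → ℝ) → ℝ≥0∞} {E : Set (Fin n → ℝ)} {t : ℝ} {j : ℕ} {p K : ℝ}

lemma mul_div_rpow_anti (hp : 1 ≤ p) {τ x β : ℝ≥0∞} (hτ0 : τ ≠ 0) (hτx : τ ≤ x)
    (hxβ : x ≤ β) (hβt : β ≠ ⊤) : x * (β / x) ^ p ≤ τ * (β / τ) ^ p := by
  have hx0 : x ≠ 0 := fun hc => hτ0 (le_antisymm (hc ▸ hτx) (zero_le))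
  have hxt : x ≠ ⊤ := ne_top_of_le_ne_top hβt hxβ
  have hτt : τ ≠ ⊤ := ne_top_of_le_ne_top hxt hτx
  have key : ∀ y : ℝ≥0∞, y ≠ 0 → y ≠ ⊤ → y * (β / y) ^ p = β ^ p * (y ^ (p - 1))⁻¹ := by
    intro y hy0 hyt
    have hsplit : y ^ p = y ^ (p - 1) * y := by
      have h1 : y ^ (p - 1) * y ^ (1:ℝ) = y ^ (p - 1 + 1) := (ENNReal.rpow_add _ _ hy0 hyt).symm
      rw [ENNReal.rpow_one] at h1
      rw [h1, sub_add_cancel]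
    rw [ENNReal.div_rpow_of_nonneg _ _ (by linarith : (0:ℝ) ≤ p), div_eq_mul_inv, hsplit,
      ENNReal.mul_inv (Or.inr hyt) (Or.inl (ENNReal.rpow_ne_top_of_nonneg (by linarith) hyt))]
    calc y * (β ^ p * ((y ^ (p-1))⁻¹ * y⁻¹))
        = β ^ p * (y ^ (p-1))⁻¹ * (y * y⁻¹) := by ring
      _ = β ^ p * (y ^ (p-1))⁻¹ := by
          rw [ENNReal.mul_inv_cancel hy0 hyt, mul_one]
  rw [key x hx0 hxt, key τ hτ0 hτt]
  apply mul_le_mul_right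
  apply ENNReal.inv_le_inv.mpr
  exact ENNReal.rpow_le_rpow hτx (by linarith)

lemma beta_div_tau (ht : 0 < t) (q : Idx n) :
    bS n q.1 / τq t q = 2 ^ (n + 2) / ENNReal.ofReal t := by
  have htn0 : ENNReal.ofReal t ≠ 0 := by simp [ENNReal.ofReal_pos, ht, ne_of_gt]
  have htnt : ENNReal.ofReal t ≠ ⊤ := ENNReal.ofReal_ne_top
  have hβ0 : bS n q.1 ≠ 0 := bS_pos.ne'
  have hβt : bS n q.1 ≠ ⊤ := bS_ne_top
  have hP0 : ((2:ℝ≥0∞) ^ (n+2)) ≠ 0 := (by positivity : (0:ℝ≥0∞) < 2 ^ (n+2)).ne'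
  have hPt : ((2:ℝ≥0∞) ^ (n+2)) ≠ ⊤ := ENNReal.pow_ne_top (by norm_num)
  rw [τq, div_eq_mul_inv, div_eq_mul_inv, div_eq_mul_inv]
  rw [ENNReal.mul_inv (Or.inl (mul_ne_zero htn0 hβ0)) (Or.inr (by simpa using hP0))]
  rw [ENNReal.mul_inv (Or.inl htn0) (Or.inr hβ0), inv_inv]
  calc bS n q.1 * ((ENNReal.ofReal t)⁻¹ * (bS n q.1)⁻¹ * 2 ^ (n+2))
      = (bS n q.1 * (bS n q.1)⁻¹) * (2 ^ (n+2) * (ENNReal.ofReal t)⁻¹) := by ring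
    _ = 2 ^ (n+2) * (ENNReal.ofReal t)⁻¹ := by
        rw [ENNReal.mul_inv_cancel hβ0 hβt, one_mul]

lemma lintegral_w_Qc_ne_top
    (hyp : ∀ (k : ℤ) (m : Fin n → ℤ), ∀ A ⊆ dyCubePlus k m, MeasurableSet A →
      volume A / volume (dyCube k m)
        ≤ ENNReal.ofReal K * ((∫⁻ x in A, v x) / ∫⁻ x in dyCube k m, w x) ^ (1 / p))
    (hp : 1 ≤ p) (q : Idx n) : (∫⁻ x in Qc q, w x) ≠ ⊤ := by
  intro hcon
  have h := hyp q.1 q.2 (dyCubePlus q.1 q.2) (subset_refl _)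
    (by rw [dyCubePlus_eq]; exact measurableSet_dyCube _ _)
  rw [volume_dyCubePlus, volume_dyCube] at h
  rw [ENNReal.div_self bS_pos.ne' bS_ne_top] at h
  have hω : (∫⁻ x in dyCube q.1 q.2, w x) = ⊤ := hcon
  rw [hω, ENNReal.div_top, ENNReal.zero_rpow_of_pos (by positivity : 0 < 1/p), mul_zero] at h
  exact absurd h (by norm_num)

/-- Key per-cube estimate coming from the `A_p^{+,d}` condition. -/
lemma invert (hp : 1 ≤ p)
    (hyp : ∀ (k : ℤ) (m : Fin n → ℤ), ∀ A ⊆ dyCubePlus k m, MeasurableSet A →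
      volume A / volume (dyCube k m)
        ≤ ENNReal.ofReal K * ((∫⁻ x in A, v x) / ∫⁻ x in dyCube k m, w x) ^ (1 / p))
    (hv : Measurable v) (hE : MeasurableSet E) (ht : 0 < t)
    {q : Idx n} (hq : q ∈ sel E t) :
    (∫⁻ x in Qc q, w x) ≤ ENNReal.ofReal K ^ p
      * ((2:ℝ≥0∞) ^ (n + 2) / ENNReal.ofReal t) ^ p * (sq v E t q * τq t q) := by
  have hp0 : (0:ℝ) < p := by linarith
  set β := bS n q.1 with hβ
  set τ := τq t q with hτdef
  set s := sq v E t q with hs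
  set A := Aq v E t q with hA
  set ω := ∫⁻ x in Qc q, w x with hω
  set νA := ∫⁻ x in A, v x with hνA
  have hττ : 0 < τ := τq_pos ht q
  have hτA : τ ≤ volume A := quantA hv hE hq
  have hAP : A ⊆ Pc q := subset_trans inter_subset_left inter_subset_right
  have hAβ : volume A ≤ β := by
    rw [hβ, ← volume_Pc q]
    exact measure_mono hAP
  have hβ0 : β ≠ 0 := bS_pos.ne'
  have hβt : β ≠ ⊤ := bS_ne_top
  have hωtop : ω ≠ ⊤ := lintegral_w_Qc_ne_top hyp hp q
  rcases eq_or_ne ω 0 with hω0 | hω0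
  · rw [hω0]; exact zero_le
  -- apply the hypothesis to A
  have hmain := hyp q.1 q.2 A hAP (measurableSet_Aq hv hE q)
  rw [volume_dyCube] at hmain
  have hmain' : (volume A / β) ^ p ≤ ENNReal.ofReal K ^ p * (νA / ω) := by
    have h1 := ENNReal.rpow_le_rpow hmain hp0.le
    rwa [ENNReal.mul_rpow_of_nonneg _ _ hp0.le, ← ENNReal.rpow_mul,
      one_div_mul_cancel hp0.ne', ENNReal.rpow_one] at h1
  set X := (volume A / β) ^ p with hX
  have hdiv0 : volume A / β ≠ 0 := by
    apply ne_of_gt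
    apply ENNReal.div_pos (fun hc => (lt_of_lt_of_le hττ hτA).ne' hc) hβt
  have hdivt : volume A / β ≠ ⊤ := by
    apply ne_of_lt
    exact ENNReal.div_lt_top (ne_top_of_le_ne_top hβt hAβ) hβ0
  have hX0 : X ≠ 0 := (ENNReal.rpow_pos (pos_iff_ne_zero.mpr hdiv0) hdivt).ne'
  have hXt : X ≠ ⊤ := ENNReal.rpow_ne_top_of_nonneg hp0.le hdivt
  have h2 : X * ω ≤ ENNReal.ofReal K ^ p * νA := by
    rw [← mul_div_assoc] at hmain'
    exact (ENNReal.le_div_iff_mul_le (Or.inl hω0) (Or.inl hωtop)).mp hmain'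
  have h3 : ω ≤ ENNReal.ofReal K ^ p * νA / X := by
    rw [ENNReal.le_div_iff_mul_le (Or.inl hX0) (Or.inl hXt)]
    rw [mul_comm] at h2
    exact h2
  have hνAs : νA ≤ s * volume A := by
    calc νA ≤ ∫⁻ _x in A, s := by
          apply setLIntegral_mono' (measurableSet_Aq hv hE q)
          intro x hx
          exact hx.2
      _ = s * volume A := setLIntegral_const A s
  have hXinv : X⁻¹ = (β / volume A) ^ p := by
    rw [hX, ← ENNReal.inv_rpow]
    congr 1
    rw [ENNReal.inv_div (Or.inl hβt) (Or.inl hβ0)]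
  have hfinal : ENNReal.ofReal K ^ p * νA / X
      ≤ ENNReal.ofReal K ^ p * ((2:ℝ≥0∞) ^ (n + 2) / ENNReal.ofReal t) ^ p * (s * τ) := by
    rw [div_eq_mul_inv, hXinv]
    calc ENNReal.ofReal K ^ p * νA * (β / volume A) ^ p
        ≤ ENNReal.ofReal K ^ p * (s * volume A) * (β / volume A) ^ p :=
          mul_le_mul_left (mul_le_mul_right hνAs _) _
      _ = ENNReal.ofReal K ^ p * s * (volume A * (β / volume A) ^ p) := by ring
      _ ≤ ENNReal.ofReal K ^ p * s * (τ * (β / τ) ^ p) := by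
          apply mul_le_mul_right
          exact mul_div_rpow_anti hp hττ.ne' hτA hAβ hβt
      _ = ENNReal.ofReal K ^ p * (β / τ) ^ p * (s * τ) := by ring
      _ = ENNReal.ofReal K ^ p * ((2:ℝ≥0∞) ^ (n + 2) / ENNReal.ofReal t) ^ p * (s * τ) := by
          rw [hτdef, hβ, beta_div_tau ht q]
  exact le_trans h3 hfinal

end Main

namespace Main
open Apd Apd2

variable {n : ℕ} {v w : (Fin n → ℝ) → ℝ≥0∞} {E : Set (Fin n → ℝ)} {t : ℝ} {j : ℕ} {p K : ℝ}

lemma sq_mul_τq_le (hn : 1 ≤ n) (hv : Measurable v) (hE : MeasurableSet E) (ht : 0 < t)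
    {q : Idx n} (hq : q ∈ mx E t j) :
    sq v E t q * τq t q ≤ 2 * ∫⁻ x in Vq v E t j q, v x := by
  have h1 : sq v E t q * (τq t q / 2) ≤ ∫⁻ x in Vq v E t j q, v x := by
    calc sq v E t q * (τq t q / 2) ≤ sq v E t q * volume (Vq v E t j q) :=
          mul_le_mul_right (vol_Vq_ge hn hv hE ht hq) _
      _ = ∫⁻ _x in Vq v E t j q, sq v E t q := (setLIntegral_const _ _).symm
      _ ≤ ∫⁻ x in Vq v E t j q, v x := by
          apply setLIntegral_mono' (chunkSet_measurable _ _ _ _)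
          intro x hx
          have hxU : x ∈ Uq v E t q := (Vq_subset v E t j q hx).1
          exact not_lt.mp hxU.2
  calc sq v E t q * τq t q = 2 * (sq v E t q * (τq t q / 2)) := by
        rw [← mul_assoc, mul_comm (2:ℝ≥0∞) (sq v E t q), mul_assoc,
          ENNReal.mul_div_cancel' (by norm_num) (by norm_num)]
    _ ≤ 2 * ∫⁻ x in Vq v E t j q, v x := mul_le_mul_right h1 _

/-- The main estimate for a fixed truncation level `j`. -/
lemma main_j (hn : 1 ≤ n) (hp : 1 ≤ p) (hv : Measurable v) (hE : MeasurableSet E) (ht : 0 < t)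
    (hyp : ∀ (k : ℤ) (m : Fin n → ℤ), ∀ A ⊆ dyCubePlus k m, MeasurableSet A →
      volume A / volume (dyCube k m)
        ≤ ENNReal.ofReal K * ((∫⁻ x in A, v x) / ∫⁻ x in dyCube k m, w x) ^ (1 / p)) :
    (volume.withDensity w) (⋃ q ∈ selJ E t j, Qc q)
      ≤ ENNReal.ofReal K ^ p * ((2:ℝ≥0∞) ^ (n + 2) / ENNReal.ofReal t) ^ p * 2
        * ∫⁻ x in E, v x := by
  classical
  set μw := volume.withDensity w with hμw
  set μv := volume.withDensity v with hμv
  set CST := ENNReal.ofReal K ^ p * ((2:ℝ≥0∞) ^ (n + 2) / ENNReal.ofReal t) ^ p with hCST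
  have hcover : (⋃ q ∈ selJ E t j, Qc q) ⊆ ⋃ q ∈ mx E t j, Qc q := by
    intro x hx
    obtain ⟨q, hq, hxq⟩ := mem_iUnion₂.mp hx
    obtain ⟨qs, hqs, hsub⟩ := exists_max hn hq
    exact mem_iUnion₂.mpr ⟨qs, hqs, hsub hxq⟩
  have hstep1 : μw (⋃ q ∈ selJ E t j, Qc q) ≤ ∑' q : (mx E t j : Set (Idx n)), μw (Qc q.1) :=
    le_trans (measure_mono hcover) (measure_biUnion_le μw (Set.to_countable _) _)
  have hperq : ∀ q : (mx E t j : Set (Idx n)), μw (Qc q.1) ≤ CST * (2 * ∫⁻ x in Vq v E t j q.1, v x) := by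
    rintro ⟨q, hq⟩
    have h1 : μw (Qc q) = ∫⁻ x in Qc q, w x := withDensity_apply w (measurableSet_Qc q)
    calc μw (Qc q) = ∫⁻ x in Qc q, w x := h1
      _ ≤ CST * (sq v E t q * τq t q) := invert hp hyp hv hE ht hq.1.1
      _ ≤ CST * (2 * ∫⁻ x in Vq v E t j q, v x) :=
          mul_le_mul_right (sq_mul_τq_le hn hv hE ht hq) _
  have hsum : ∑' q : (mx E t j : Set (Idx n)), μw (Qc q.1)
      ≤ CST * 2 * ∑' q : (mx E t j : Set (Idx n)), μv (Vq v E t j q.1) := by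
    calc ∑' q : (mx E t j : Set (Idx n)), μw (Qc q.1)
        ≤ ∑' q : (mx E t j : Set (Idx n)), CST * (2 * ∫⁻ x in Vq v E t j q.1, v x) :=
          ENNReal.tsum_le_tsum hperq
      _ = CST * 2 * ∑' q : (mx E t j : Set (Idx n)), ∫⁻ x in Vq v E t j q.1, v x := by
          rw [← ENNReal.tsum_mul_left]
          congr 1
          funext q
          ring
      _ = CST * 2 * ∑' q : (mx E t j : Set (Idx n)), μv (Vq v E t j q.1) := by
          congr 1
          exact tsum_congr fun q => (withDensity_apply v (chunkSet_measurable _ _ _ _)).symm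
  have hV : ∑' q : (mx E t j : Set (Idx n)), μv (Vq v E t j q.1) ≤ ∫⁻ x in E, v x := by
    rw [← measure_biUnion (Set.to_countable _) (Vq_pairwise_disjoint v E t j hn)
      (fun q _ => chunkSet_measurable _ _ _ _)]
    rw [show ∫⁻ x in E, v x = μv E from (withDensity_apply v hE).symm]
    apply measure_mono
    intro x hx
    obtain ⟨q, _, hxq⟩ := mem_iUnion₂.mp hx
    exact Uq_subset_E q (Vq_subset v E t j q hxq).1
  calc μw (⋃ q ∈ selJ E t j, Qc q) ≤ ∑' q : (mx E t j : Set (Idx n)), μw (Qc q.1) := hstep1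
    _ ≤ CST * 2 * ∑' q : (mx E t j : Set (Idx n)), μv (Vq v E t j q.1) := hsum
    _ ≤ CST * 2 * ∫⁻ x in E, v x := mul_le_mul_right hV _

end Main

section FinalAux
open Apd Apd2 Main

lemma dyCube_zero_eq_univ (k : ℤ) (m : Fin 0 → ℤ) : dyCube k m = (univ : Set (Fin 0 → ℝ)) := by
  ext x
  simp only [dyCube, cube, mem_pi, mem_univ, forall_true_left, iff_true]
  intro i
  exact i.elim0

lemma dyCubePlus_zero_eq_univ (k : ℤ) (m : Fin 0 → ℤ) :
    dyCubePlus k m = (univ : Set (Fin 0 → ℝ)) := by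
  rw [dyCubePlus_eq]
  exact dyCube_zero_eq_univ _ _

lemma volume_univ_fin_zero : volume (univ : Set (Fin 0 → ℝ)) = 1 := by
  have h : (univ : Set (Fin 0 → ℝ)) = cube (fun i => (0:ℝ)) 1 := by
    ext x
    simp only [cube, mem_pi, mem_univ, forall_true_left, iff_true, true_iff]
    intro i
    exact i.elim0
  rw [h, volume_cube _ (by norm_num : (0:ℝ) ≤ 1)]
  simp

lemma Mplusd_zero (E : Set (Fin 0 → ℝ)) (x : Fin 0 → ℝ) : Mplusd E x = volume E := by
  rw [Mplusd]
  have hbody : ∀ (k : ℤ) (m : Fin 0 → ℤ),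
      (⨆ (_ : x ∈ dyCube k m), volume (E ∩ dyCubePlus k m) / volume (dyCube k m))
        = volume E := by
    intro k m
    rw [dyCube_zero_eq_univ, dyCubePlus_zero_eq_univ, volume_univ_fin_zero]
    rw [iSup_pos (mem_univ x), inter_univ, div_one]
  calc (⨆ (k : ℤ) (m : Fin 0 → ℤ) (_ : x ∈ dyCube k m),
        volume (E ∩ dyCubePlus k m) / volume (dyCube k m))
      = ⨆ (_ : ℤ) (_ : Fin 0 → ℤ), volume E := by
        apply iSup_congr
        intro k
        apply iSup_congr
        intro m
        exact hbody k m
    _ = volume E := by rw [iSup_const, iSup_const]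

end FinalAux


open Apd Apd2 Main in
/-- If `(w,v) ∈ A_p^{+,d}(𝓡)` with constant `K`, then `M^{+,d}` satisfies the restricted
weak `(p,p)` type inequality with a constant `C` depending only on `n` and `p`:
`w({M^{+,d}χ_E > t}) ≤ C K^p t⁻ᵖ v(E)`. -/
theorem restricted_Apd_implies_weak_type (n : ℕ) (p : ℝ) (hp : 1 ≤ p) :
    ∃ C : ℝ, 0 < C ∧
      ∀ (w v : (Fin n → ℝ) → ℝ≥0∞), Measurable w → Measurable v →
      ∀ K : ℝ, 0 ≤ K →
      (∀ (k : ℤ) (m : Fin n → ℤ), ∀ E ⊆ dyCubePlus k m, MeasurableSet E →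
        volume E / volume (dyCube k m)
          ≤ ENNReal.ofReal K *
            ((∫⁻ x in E, v x) / ∫⁻ x in dyCube k m, w x) ^ (1 / p)) →
      ∀ t : ℝ, 0 < t → ∀ E : Set (Fin n → ℝ), MeasurableSet E →
        ∫⁻ x in {x | ENNReal.ofReal t < Mplusd E x}, w x
          ≤ ENNReal.ofReal C * ENNReal.ofReal K ^ p / ENNReal.ofReal t ^ p *
            ∫⁻ x in E, v x := by
  have hp0 : (0:ℝ) < p := by linarith
  refine ⟨2 * ((2:ℝ) ^ (n + 2)) ^ p, by positivity, ?_⟩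
  intro w v hw hv K hK hyp t ht E hE
  -- the constant identity
  have hCeq : ENNReal.ofReal (2 * ((2:ℝ) ^ (n + 2)) ^ p) * ENNReal.ofReal K ^ p
        / ENNReal.ofReal t ^ p
      = ENNReal.ofReal K ^ p * ((2:ℝ≥0∞) ^ (n + 2) / ENNReal.ofReal t) ^ p * 2 := by
    rw [ENNReal.ofReal_mul (by norm_num : (0:ℝ) ≤ 2)]
    rw [← ENNReal.ofReal_rpow_of_pos (by positivity : (0:ℝ) < 2 ^ (n + 2))]
    rw [ENNReal.ofReal_pow (by norm_num : (0:ℝ) ≤ 2)]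
    rw [ENNReal.ofReal_ofNat]
    rw [ENNReal.div_rpow_of_nonneg _ _ hp0.le]
    rw [div_eq_mul_inv, div_eq_mul_inv]
    ring
  rw [hCeq]
  rcases Nat.eq_zero_or_pos n with hn0 | hn
  · -- the degenerate case n = 0
    subst hn0
    have hM : ∀ x, Mplusd E x = volume E := Mplusd_zero E
    by_cases hlt : ENNReal.ofReal t < volume E
    · -- E is the whole (one point) space
      have hEne : E.Nonempty := by
        rcases eq_empty_or_nonempty E with hc | hc
        · rw [hc] at hlt; simp at hlt
        · exact hc
      have hEuniv : E = univ := by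
        obtain ⟨y, hy⟩ := hEne
        ext z
        simp only [mem_univ, iff_true]
        have : z = y := Subsingleton.elim z y
        rw [this]; exact hy
      have hvolE : volume E = 1 := by rw [hEuniv, volume_univ_fin_zero]
      have hlevel : {x | ENNReal.ofReal t < Mplusd E x} = univ := by
        ext x; simp [hM, hlt]
      rw [hlevel]
      set m0 : Fin 0 → ℤ := fun i => i.elim0 with hm0
      have h := hyp 0 m0 (dyCubePlus 0 m0) (subset_refl _)
        (by rw [dyCubePlus_zero_eq_univ]; exact MeasurableSet.univ)
      rw [dyCubePlus_zero_eq_univ, dyCube_zero_eq_univ, volume_univ_fin_zero,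
        ENNReal.div_self (by norm_num) (by norm_num)] at h
      set W := ∫⁻ x in (univ : Set (Fin 0 → ℝ)), w x with hW
      set V := ∫⁻ x in (univ : Set (Fin 0 → ℝ)), v x with hV
      have hVE : (∫⁻ x in E, v x) = V := by rw [hEuniv]
      rw [hVE]
      rcases eq_or_ne W 0 with hW0 | hW0
      · rw [hW0]; exact zero_le
      have hWtop : W ≠ ⊤ := by
        intro hc
        rw [hc, ENNReal.div_top, ENNReal.zero_rpow_of_pos (by positivity : 0 < 1/p),
          mul_zero] at h
        exact absurd h (by norm_num)
      have hWle : W ≤ ENNReal.ofReal K ^ p * V := by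
        have h1 := ENNReal.rpow_le_rpow h hp0.le
        rw [ENNReal.one_rpow, ENNReal.mul_rpow_of_nonneg _ _ hp0.le, ← ENNReal.rpow_mul,
          one_div_mul_cancel hp0.ne', ENNReal.rpow_one, ← mul_div_assoc] at h1
        have h2 := (ENNReal.le_div_iff_mul_le (Or.inl hW0) (Or.inl hWtop)).mp h1
        rwa [one_mul] at h2
      have htp0 : (ENNReal.ofReal t) ^ p ≠ 0 :=
        (ENNReal.rpow_pos (by simp [ENNReal.ofReal_pos, ht]) ENNReal.ofReal_ne_top).ne'
      have htp1 : (ENNReal.ofReal t) ^ p ≤ 1 := by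
        have h1 : ENNReal.ofReal t ≤ 1 := by
          rw [hvolE] at hlt; exact hlt.le
        calc (ENNReal.ofReal t) ^ p ≤ (1:ℝ≥0∞) ^ p := ENNReal.rpow_le_rpow h1 hp0.le
          _ = 1 := ENNReal.one_rpow p
      calc W ≤ ENNReal.ofReal K ^ p * V := hWle
        _ ≤ (ENNReal.ofReal K ^ p * ((2:ℝ≥0∞) ^ (0+2) / ENNReal.ofReal t) ^ p * 2) * V := by
            apply mul_le_mul_left
            calc ENNReal.ofReal K ^ p = ENNReal.ofReal K ^ p * 1 := (mul_one _).symm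
              _ ≤ ENNReal.ofReal K ^ p * (((2:ℝ≥0∞) ^ (0+2) / ENNReal.ofReal t) ^ p * 2) := by
                  apply mul_le_mul_right
                  have h4 : (1:ℝ≥0∞) ≤ ((2:ℝ≥0∞) ^ (0+2) / ENNReal.ofReal t) ^ p := by
                    have h5 : (1:ℝ≥0∞) ≤ (2:ℝ≥0∞) ^ (0+2) / ENNReal.ofReal t := by
                      rw [ENNReal.le_div_iff_mul_le (Or.inl (by simp [ENNReal.ofReal_pos, ht,
                        ne_of_gt])) (Or.inl ENNReal.ofReal_ne_top)]
                      rw [one_mul]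
                      calc ENNReal.ofReal t ≤ 1 := by rw [hvolE] at hlt; exact hlt.le
                        _ ≤ (2:ℝ≥0∞) ^ (0+2) := by norm_num
                    calc (1:ℝ≥0∞) = 1 ^ p := (ENNReal.one_rpow p).symm
                      _ ≤ ((2:ℝ≥0∞) ^ (0+2) / ENNReal.ofReal t) ^ p :=
                          ENNReal.rpow_le_rpow h5 hp0.le
                  calc (1:ℝ≥0∞) ≤ 1 * 2 := by norm_num
                    _ ≤ ((2:ℝ≥0∞) ^ (0+2) / ENNReal.ofReal t) ^ p * 2 :=
                        mul_le_mul_left h4 _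
              _ = ENNReal.ofReal K ^ p * ((2:ℝ≥0∞) ^ (0+2) / ENNReal.ofReal t) ^ p * 2 := by
                  ring
        _ = ENNReal.ofReal K ^ p * ((2:ℝ≥0∞) ^ (0+2) / ENNReal.ofReal t) ^ p * 2 * V := rfl
    · have hlevel : {x | ENNReal.ofReal t < Mplusd E x} = ∅ := by
        ext x; simp [hM, hlt]
      rw [hlevel]
      simp
  · -- main case n ≥ 1
    set SJ : ℕ → Set (Fin n → ℝ) := fun j => ⋃ q ∈ selJ E t j, Qc q with hSJ
    have hSJmeas : ∀ j, MeasurableSet (SJ j) := by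
      intro j
      exact MeasurableSet.biUnion (Set.to_countable _) (fun q _ => measurableSet_Qc q)
    have hSJmono : Monotone SJ := by
      intro j j' hjj
      apply iUnion₂_mono'
      intro q hq
      exact ⟨q, ⟨hq.1, le_trans hq.2 hjj⟩, subset_refl _⟩
    have hlevel : {x | ENNReal.ofReal t < Mplusd E x} ⊆ ⋃ j, SJ j := by
      intro x hx
      rw [mem_setOf_eq, Mplusd] at hx
      obtain ⟨k, hk⟩ := lt_iSup_iff.mp hx
      obtain ⟨m, hm⟩ := lt_iSup_iff.mp hk
      obtain ⟨hmem, hltq⟩ := lt_iSup_iff.mp hm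
      rw [volume_dyCube] at hltq
      have hsel : (k, m) ∈ sel E t := by
        rw [sel, mem_setOf_eq]
        exact (ENNReal.lt_div_iff_mul_lt (Or.inl bS_pos.ne') (Or.inl bS_ne_top)).mp hltq
      refine mem_iUnion.mpr ⟨k.natAbs, mem_iUnion₂.mpr ⟨(k, m), ⟨hsel, le_refl _⟩, hmem⟩⟩
    calc ∫⁻ x in {x | ENNReal.ofReal t < Mplusd E x}, w x
        ≤ ∫⁻ x in ⋃ j, SJ j, w x :=
          lintegral_mono' (Measure.restrict_mono hlevel le_rfl) le_rfl
      _ = (volume.withDensity w) (⋃ j, SJ j) :=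
          (withDensity_apply w (MeasurableSet.iUnion hSJmeas)).symm
      _ = ⨆ j, (volume.withDensity w) (SJ j) := hSJmono.measure_iUnion
      _ ≤ ENNReal.ofReal K ^ p * ((2:ℝ≥0∞) ^ (n + 2) / ENNReal.ofReal t) ^ p * 2
          * ∫⁻ x in E, v x := by
          apply iSup_le
          intro j
          exact main_j hn hp hv hE ht hyp
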